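/- (Convergence of optimal densities as the temporal penalty vanishes.) Suppose in addition that φ is continuous at 0 and let p ∈ (1,∞). For each λ > 0 let ρ^λ be the unique optimal density for Mod^λ_{p,σ}(Γ) (the unique N_λ-admissible density attaining the modulus), and let ρ̌ be the unique optimal density for Mod_{p,σ}(Γ̌). Then ρ^λ → ρ̌ (in ℝ^E) as λ → 0⁺. -/

import Mathlib

open Finset

noncomputable section

/-- A density `ρ` is admissible for the usage matrix `N` if it is nonnegative and
every object has `ρ`-length at least 1. -/
def IsAdmissible {E Γ : Type*} [Fintype E] (N : Γ → E → ℝ) (ρ : E → ℝ) : Prop :=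
  (∀ e, 0 ≤ ρ e) ∧ ∀ γ : Γ, 1 ≤ ∑ e, N γ e * ρ e

/-- The `p`-energy of a density. -/
def pEnergy {E : Type*} [Fintype E] (σ : E → ℝ) (p : ℝ) (ρ : E → ℝ) : ℝ :=
  ∑ e, σ e * ρ e ^ p

/-- The `p`-modulus: the infimum of the `p`-energy over admissible densities. -/
def pModulus {E Γ : Type*} [Fintype E] (N : Γ → E → ℝ) (σ : E → ℝ) (p : ℝ) : ℝ :=
  sInf {x | ∃ ρ : E → ℝ, IsAdmissible N ρ ∧ x = pEnergy σ p ρ}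

lemma pEnergy_nonneg {E : Type*} [Fintype E] {σ : E → ℝ} (hσ : ∀ e, 0 ≤ σ e)
    {p : ℝ} {ρ : E → ℝ} (hρ : ∀ e, 0 ≤ ρ e) : 0 ≤ pEnergy σ p ρ :=
  Finset.sum_nonneg fun e _ => mul_nonneg (hσ e) (Real.rpow_nonneg (hρ e) p)

lemma pModulus_le {E Γ : Type*} [Fintype E] {N : Γ → E → ℝ} {σ : E → ℝ}
    (hσ : ∀ e, 0 ≤ σ e) {p : ℝ} {ρ : E → ℝ} (h : IsAdmissible N ρ) :
    pModulus N σ p ≤ pEnergy σ p ρ := by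
  refine csInf_le ⟨0, ?_⟩ ⟨ρ, h, rfl⟩
  rintro x ⟨ρ', hρ', rfl⟩
  exact pEnergy_nonneg hσ hρ'.1

/-- Uniqueness of the optimal density (strict convexity of the energy). -/
lemma optimal_density_unique {E Γ : Type*} [Fintype E] {N : Γ → E → ℝ} {σ : E → ℝ}
    (hσ : ∀ e, 0 < σ e) {p : ℝ} (hp : 1 < p) {ρ₁ ρ₂ : E → ℝ}
    (h₁ : IsAdmissible N ρ₁) (h₂ : IsAdmissible N ρ₂)
    (he₁ : pEnergy σ p ρ₁ = pModulus N σ p) (he₂ : pEnergy σ p ρ₂ = pModulus N σ p) :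
    ρ₁ = ρ₂ := by
  by_contra hne
  obtain ⟨e₀, he₀⟩ : ∃ e, ρ₁ e ≠ ρ₂ e := by
    by_contra h; push_neg at h; exact hne (funext h)
  set m : E → ℝ := fun e => 2⁻¹ * ρ₁ e + 2⁻¹ * ρ₂ e with hm
  have hmadm : IsAdmissible N m := by
    constructor
    · intro e; have := h₁.1 e; have := h₂.1 e; positivity
    · intro γ
      have h1 := h₁.2 γ
      have h2 := h₂.2 γ
      have : ∑ e, N γ e * m e = 2⁻¹ * (∑ e, N γ e * ρ₁ e) + 2⁻¹ * (∑ e, N γ e * ρ₂ e) := by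
        rw [Finset.mul_sum, Finset.mul_sum, ← Finset.sum_add_distrib]
        exact Finset.sum_congr rfl fun e _ => by ring
      rw [this]; linarith
  have hub : pModulus N σ p ≤ pEnergy σ p m := pModulus_le (fun e => (hσ e).le) hmadm
  have hconv := strictConvexOn_rpow hp
  have hstrict : pEnergy σ p m < 2⁻¹ * pEnergy σ p ρ₁ + 2⁻¹ * pEnergy σ p ρ₂ := by
    have hsum : 2⁻¹ * pEnergy σ p ρ₁ + 2⁻¹ * pEnergy σ p ρ₂
        = ∑ e, (σ e * (2⁻¹ * ρ₁ e ^ p + 2⁻¹ * ρ₂ e ^ p)) := by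
      unfold pEnergy
      rw [Finset.mul_sum, Finset.mul_sum, ← Finset.sum_add_distrib]
      exact Finset.sum_congr rfl fun e _ => by ring
    rw [hsum]
    unfold pEnergy
    refine Finset.sum_lt_sum (fun e _ => ?_) ⟨e₀, Finset.mem_univ e₀, ?_⟩
    · refine mul_le_mul_of_nonneg_left ?_ (hσ e).le
      have := hconv.convexOn.2 (Set.mem_Ici.mpr (h₁.1 e)) (Set.mem_Ici.mpr (h₂.1 e))
        (by norm_num : (0:ℝ) ≤ 2⁻¹) (by norm_num : (0:ℝ) ≤ 2⁻¹) (by norm_num)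
      simpa [smul_eq_mul] using this
    · refine mul_lt_mul_of_pos_left ?_ (hσ e₀)
      have := hconv.2 (Set.mem_Ici.mpr (h₁.1 e₀)) (Set.mem_Ici.mpr (h₂.1 e₀)) he₀
        (by norm_num : (0:ℝ) < 2⁻¹) (by norm_num : (0:ℝ) < 2⁻¹) (by norm_num)
      simpa [smul_eq_mul] using this
  rw [he₁, he₂] at hstrict
  have : 2⁻¹ * pModulus N σ p + 2⁻¹ * pModulus N σ p = pModulus N σ p := by ring
  rw [this] at hstrict
  linarith

/-- convergence of optimal densities as the temporal penalty vanishes: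
for `p ∈ (1,∞)`, the unique optimal densities `ρ^λ` converge to the unique optimal density
`ρ̌` of the static problem as `λ → 0⁺`. -/
theorem temporal_optimal_density_tendsto_static
    {E Γ : Type*} [Fintype E] [Fintype Γ] [Nonempty E] [Nonempty Γ]
    (Nch : Γ → E → ℝ) (hN01 : ∀ γ e, Nch γ e = 0 ∨ Nch γ e = 1)
    (hrow : ∀ γ, ∃ e, Nch γ e = 1)
    (t : Γ → E → ℝ) (ht : ∀ γ e, Nch γ e = 1 → 0 < t γ e)
    (φ : ℝ → ℝ) (hφ0 : φ 0 = 1) (hφmono : MonotoneOn φ (Set.Ici 0))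
    (hφcont : ContinuousAt φ 0)
    (σ : E → ℝ) (hσ : ∀ e, 0 < σ e)
    (p : ℝ) (hp : 1 < p)
    (ρlam : ℝ → E → ℝ)
    (hρlam : ∀ lam : ℝ, 0 < lam →
      IsAdmissible (fun γ e => φ (lam * t γ e) * Nch γ e) (ρlam lam) ∧
      pEnergy σ p (ρlam lam) = pModulus (fun γ e => φ (lam * t γ e) * Nch γ e) σ p)
    (ρcheck : E → ℝ)
    (hρcheck : IsAdmissible Nch ρcheck ∧ pEnergy σ p ρcheck = pModulus Nch σ p) :
    Filter.Tendsto ρlam (nhdsWithin 0 (Set.Ioi 0)) (nhds ρcheck) := by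
  have hp0 : (0:ℝ) < p := lt_trans one_pos hp
  set M : ℝ := pEnergy σ p ρcheck with hM
  have hM0 : 0 ≤ M := pEnergy_nonneg (fun e => (hσ e).le) hρcheck.1.1
  -- ρcheck is admissible for every penalized matrix
  have hcheck_adm : ∀ lam : ℝ, 0 < lam →
      IsAdmissible (fun γ e => φ (lam * t γ e) * Nch γ e) ρcheck := by
    intro lam hlam
    refine ⟨hρcheck.1.1, fun γ => ?_⟩
    refine le_trans (hρcheck.1.2 γ) (Finset.sum_le_sum fun e _ => ?_)
    rcases hN01 γ e with h0 | h1
    · simp [h0]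
    · have htpos : 0 < lam * t γ e := mul_pos hlam (ht γ e h1)
      have hφge : 1 ≤ φ (lam * t γ e) := by
        rw [← hφ0]
        exact hφmono (Set.mem_Ici.mpr le_rfl) (Set.mem_Ici.mpr htpos.le) htpos.le
      simp only [h1, mul_one, one_mul]
      exact le_mul_of_one_le_left (hρcheck.1.1 e) hφge
  -- uniform energy bound
  have hEbound : ∀ lam : ℝ, 0 < lam → pEnergy σ p (ρlam lam) ≤ M := by
    intro lam hlam
    rw [(hρlam lam hlam).2]
    exact pModulus_le (fun e => (hσ e).le) (hcheck_adm lam hlam)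
  -- coordinatewise bound
  set B : E → ℝ := fun e => (M / σ e) ^ p⁻¹ with hB
  have hmemIcc : ∀ lam : ℝ, 0 < lam → ρlam lam ∈ Set.Icc (0 : E → ℝ) B := by
    intro lam hlam
    have hnn := (hρlam lam hlam).1.1
    refine Set.mem_Icc.mpr ⟨fun e => hnn e, fun e => ?_⟩
    have hterm : σ e * ρlam lam e ^ p ≤ M := by
      refine le_trans ?_ (hEbound lam hlam)
      exact Finset.single_le_sum
        (fun e' _ => mul_nonneg (hσ e').le (Real.rpow_nonneg (hnn e') p)) (Finset.mem_univ e)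
    have h1 : ρlam lam e ^ p ≤ M / σ e := (le_div_iff₀' (hσ e)).mpr hterm
    have h2 : (ρlam lam e ^ p) ^ p⁻¹ ≤ (M / σ e) ^ p⁻¹ :=
      Real.rpow_le_rpow (Real.rpow_nonneg (hnn e) p) h1 (inv_nonneg.mpr hp0.le)
    rwa [← Real.rpow_mul (hnn e), mul_inv_cancel₀ (ne_of_gt hp0), Real.rpow_one] at h2
  -- suppose not
  by_contra hcon
  rw [Metric.tendsto_nhdsWithin_nhds] at hcon
  push_neg at hcon
  obtain ⟨ε, hε, H⟩ := hcon
  have H' : ∀ n : ℕ, ∃ x : ℝ, 0 < x ∧ x < ((n : ℝ) + 1)⁻¹ ∧ ε ≤ dist (ρlam x) ρcheck := by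
    intro n
    obtain ⟨x, hx, hd, hge⟩ := H (((n : ℝ) + 1)⁻¹) (by positivity)
    refine ⟨x, hx, ?_, hge⟩
    simpa [Real.dist_eq, abs_of_pos (Set.mem_Ioi.mp hx)] using hd
  choose lam hlam1 hlam2 hlam3 using H'
  have hlam0 : Filter.Tendsto lam Filter.atTop (nhds 0) := by
    have hub : Filter.Tendsto (fun n : ℕ => ((n : ℝ) + 1)⁻¹) Filter.atTop (nhds 0) := by
      simpa [one_div] using tendsto_one_div_add_atTop_nhds_zero_nat (𝕜 := ℝ)
    exact squeeze_zero (fun n => (hlam1 n).le) (fun n => (hlam2 n).le) hub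
  set x : ℕ → E → ℝ := fun n => ρlam (lam n) with hx
  have hxmem : ∀ n, x n ∈ Set.Icc (0 : E → ℝ) B := fun n => hmemIcc (lam n) (hlam1 n)
  obtain ⟨a, ha_mem, ψ, hψ, hconv⟩ := (isCompact_Icc (a := (0 : E → ℝ)) (b := B)).tendsto_subseq hxmem
  have hlam' : Filter.Tendsto (fun n => lam (ψ n)) Filter.atTop (nhds 0) :=
    hlam0.comp hψ.tendsto_atTop
  have hxe : ∀ e, Filter.Tendsto (fun n => x (ψ n) e) Filter.atTop (nhds (a e)) := by
    intro e
    exact (tendsto_pi_nhds.mp hconv) e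
  have ha_nonneg : ∀ e, 0 ≤ a e := fun e => (Set.mem_Icc.mp ha_mem).1 e
  -- the limit a is admissible for Nch
  have hφlim : ∀ (c : ℝ), Filter.Tendsto (fun n => φ (lam (ψ n) * c)) Filter.atTop (nhds 1) := by
    intro c
    have h1 : Filter.Tendsto (fun n => lam (ψ n) * c) Filter.atTop (nhds 0) := by
      simpa using hlam'.mul_const c
    have := hφcont.tendsto.comp h1
    rwa [hφ0] at this
  have ha_adm : IsAdmissible Nch a := by
    refine ⟨ha_nonneg, fun γ => ?_⟩
    have hterm : ∀ e : E, Filter.Tendsto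
        (fun n => (φ (lam (ψ n) * t γ e) * Nch γ e) * x (ψ n) e)
        Filter.atTop (nhds ((1 * Nch γ e) * a e)) :=
      fun e => ((hφlim (t γ e)).mul_const (Nch γ e)).mul (hxe e)
    have hsum : Filter.Tendsto
        (fun n => ∑ e, (φ (lam (ψ n) * t γ e) * Nch γ e) * x (ψ n) e)
        Filter.atTop (nhds (∑ e, (1 * Nch γ e) * a e)) :=
      tendsto_finset_sum _ fun e _ => hterm e
    have hge : ∀ n, 1 ≤ ∑ e, (φ (lam (ψ n) * t γ e) * Nch γ e) * x (ψ n) e :=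
      fun n => (hρlam (lam (ψ n)) (hlam1 (ψ n))).1.2 γ
    have := ge_of_tendsto' hsum hge
    simpa using this
  -- energy of a is at most M
  have heng : Filter.Tendsto (fun n => pEnergy σ p (x (ψ n))) Filter.atTop
      (nhds (pEnergy σ p a)) := by
    unfold pEnergy
    refine tendsto_finset_sum _ fun e _ => ?_
    have hrp : Filter.Tendsto (fun n => x (ψ n) e ^ p) Filter.atTop (nhds (a e ^ p)) :=
      (Real.continuousAt_rpow_const (a e) p (Or.inr hp0.le)).tendsto.comp (hxe e)
    exact hrp.const_mul (σ e)
  have haM : pEnergy σ p a ≤ M :=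
    le_of_tendsto heng (Filter.Eventually.of_forall fun n => hEbound (lam (ψ n)) (hlam1 (ψ n)))
  have hMa : pModulus Nch σ p ≤ pEnergy σ p a := pModulus_le (fun e => (hσ e).le) ha_adm
  have ha_opt : pEnergy σ p a = pModulus Nch σ p :=
    le_antisymm (le_of_le_of_eq haM hρcheck.2) hMa
  have ha_eq : a = ρcheck :=
    optimal_density_unique hσ hp ha_adm hρcheck.1 ha_opt hρcheck.2
  -- contradiction with dist ≥ ε
  have hdist : Filter.Tendsto (fun n => dist (x (ψ n)) ρcheck) Filter.atTop (nhds 0) := by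
    rw [← ha_eq]
    exact tendsto_iff_dist_tendsto_zero.mp hconv
  have : ε ≤ 0 := ge_of_tendsto' hdist fun n => hlam3 (ψ n)
  linarith
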